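/- Let (F, G) be a dual pair for H with B_G a Bessel bound of G, and let K : Ω → H be a Bessel mapping. Assume there exist constants λ, γ ≥ 0 with λ + γ√B_G < 1 such that ‖T_F φ − T_K φ‖ ≤ λ‖T_F φ‖ + γ‖φ‖_{L²} for all φ ∈ L²(Ω, μ). Then ‖I_H − T_K T_G*‖ ≤ λ + γ√B_G < 1, i.e. G and K are approximately dual continuous frames. -/

import Mathlib

open MeasureTheory
open scoped ENNReal

noncomputable section

variable {H : Type*} [NormedAddCommGroup H] [InnerProductSpace ℂ H] [CompleteSpace H]
variable {Ω : Type*} [MeasurableSpace Ω]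

/-- A map `F : Ω → H` is weakly measurable if `ω ↦ ⟨f, F ω⟩` is measurable for every `f ∈ H`. -/
def WeaklyMeasurableMap (F : Ω → H) : Prop :=
  ∀ f : H, Measurable fun ω => (inner ℂ f (F ω) : ℂ)

/-- `F` is a Bessel mapping for `H` with respect to `(Ω, μ)` with Bessel bound `B`:
it is weakly measurable and `∫ |⟨f, F ω⟩|² dμ ≤ B ‖f‖²` for all `f`. -/
def IsBesselMapping (μ : Measure Ω) (F : Ω → H) (B : ℝ) : Prop :=
  WeaklyMeasurableMap F ∧ ∀ f : H, ∫ ω, ‖(inner ℂ f (F ω) : ℂ)‖ ^ 2 ∂μ ≤ B * ‖f‖ ^ 2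

/-- `F` is a continuous frame for `H` with respect to `(Ω, μ)` with bounds `0 < A ≤ B`. -/
def IsContinuousFrame (μ : Measure Ω) (F : Ω → H) (A B : ℝ) : Prop :=
  WeaklyMeasurableMap F ∧ 0 < A ∧ A ≤ B ∧
    ∀ f : H, A * ‖f‖ ^ 2 ≤ ∫ ω, ‖(inner ℂ f (F ω) : ℂ)‖ ^ 2 ∂μ ∧
      ∫ ω, ‖(inner ℂ f (F ω) : ℂ)‖ ^ 2 ∂μ ≤ B * ‖f‖ ^ 2

/-- `T` is the synthesis operator of the Bessel mapping `F`: its adjoint (the analysis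
operator) satisfies `(T* f)(ω) = ⟨f, F ω⟩` for `μ`-a.e. `ω`, for every `f ∈ H`. -/
def IsSynthesisOperator (μ : Measure Ω) (F : Ω → H) (T : Lp ℂ 2 μ →L[ℂ] H) : Prop :=
  ∀ f : H, (ContinuousLinearMap.adjoint T f : Ω → ℂ) =ᵐ[μ] fun ω => (inner ℂ f (F ω) : ℂ)

private lemma l2_norm_sq_eq {Ω : Type*} [MeasurableSpace Ω] {μ : Measure Ω}
    (φ : Lp ℂ 2 μ) : ‖φ‖ ^ 2 = ∫ ω, ‖φ ω‖ ^ 2 ∂μ := by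
  have h1 : ‖φ‖ ^ 2 = ((inner ℂ φ φ : ℂ)).re := norm_sq_eq_re_inner (𝕜 := ℂ) φ
  rw [h1, L2.inner_def, ← RCLike.re_to_complex, ← integral_re (L2.integrable_inner φ φ)]
  refine integral_congr_ae (Filter.Eventually.of_forall fun ω => ?_)
  have h2 : ‖(φ : Ω → ℂ) ω‖ ^ 2 = ((inner ℂ ((φ : Ω → ℂ) ω) ((φ : Ω → ℂ) ω) : ℂ)).re :=
    norm_sq_eq_re_inner (𝕜 := ℂ) _
  simp [h2]

/-- if `(F, G)` is a dual pair with `B_G` a Bessel bound of `G`, `K` is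
a Bessel mapping, and `‖T_F φ - T_K φ‖ ≤ λ ‖T_F φ‖ + γ ‖φ‖₂` for all `φ ∈ L²` with
`λ + γ √B_G < 1`, then `‖I - T_K T_G*‖ ≤ λ + γ √B_G < 1`, i.e. `G` and `K` are
approximately dual continuous frames. -/
theorem statement19 {μ : Measure Ω} (F G K : Ω → H) (B_F B_G B_K : ℝ)
    (hF : IsBesselMapping μ F B_F) (hG : IsBesselMapping μ G B_G)
    (hK : IsBesselMapping μ K B_K)
    (TF TG TK : Lp ℂ 2 μ →L[ℂ] H)
    (hTF : IsSynthesisOperator μ F TF) (hTG : IsSynthesisOperator μ G TG)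
    (hTK : IsSynthesisOperator μ K TK)
    (hdual : ∀ f g : H, (inner ℂ f g : ℂ) =
      ∫ ω, (inner ℂ f (F ω) : ℂ) * (inner ℂ (G ω) g : ℂ) ∂μ)
    (hdualOp : TG ∘L ContinuousLinearMap.adjoint TF = 1)
    (lam gam : ℝ) (hlam : 0 ≤ lam) (hgam : 0 ≤ gam)
    (hsum : lam + gam * Real.sqrt B_G < 1)
    (hpert : ∀ φ : Lp ℂ 2 μ, ‖TF φ - TK φ‖ ≤ lam * ‖TF φ‖ + gam * ‖φ‖) :
    ‖(1 : H →L[ℂ] H) - TK ∘L ContinuousLinearMap.adjoint TG‖ ≤ lam + gam * Real.sqrt B_G ∧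
      lam + gam * Real.sqrt B_G < 1 := by
  have hGb : ∀ f : H, ‖ContinuousLinearMap.adjoint TG f‖ ≤ Real.sqrt B_G * ‖f‖ := by
    intro f
    have h1 : ‖ContinuousLinearMap.adjoint TG f‖ ^ 2
        = ∫ ω, ‖(inner ℂ f (G ω) : ℂ)‖ ^ 2 ∂μ := by
      rw [l2_norm_sq_eq]
      exact integral_congr_ae ((hTG f).mono fun ω h => by simp only []; rw [h])
    have h2 : ‖ContinuousLinearMap.adjoint TG f‖ ^ 2 ≤ B_G * ‖f‖ ^ 2 := by
      rw [h1]; exact hG.2 f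
    calc ‖ContinuousLinearMap.adjoint TG f‖
        = Real.sqrt (‖ContinuousLinearMap.adjoint TG f‖ ^ 2) :=
          (Real.sqrt_sq (norm_nonneg _)).symm
      _ ≤ Real.sqrt (B_G * ‖f‖ ^ 2) := Real.sqrt_le_sqrt h2
      _ = Real.sqrt B_G * ‖f‖ := by
          rw [Real.sqrt_mul' _ (sq_nonneg _), Real.sqrt_sq (norm_nonneg _)]
  have hTFG : TF ∘L ContinuousLinearMap.adjoint TG = 1 := by
    have h := congrArg ContinuousLinearMap.adjoint hdualOp
    simpa [ContinuousLinearMap.adjoint_comp, ContinuousLinearMap.adjoint_adjoint,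
      ContinuousLinearMap.one_def, ContinuousLinearMap.adjoint_id] using h
  refine ⟨?_, hsum⟩
  have hnn : 0 ≤ lam + gam * Real.sqrt B_G := by positivity
  refine ContinuousLinearMap.opNorm_le_bound _ hnn fun f => ?_
  have hTFf : TF (ContinuousLinearMap.adjoint TG f) = f := by
    have := ContinuousLinearMap.ext_iff.mp hTFG f
    simpa using this
  calc ‖((1 : H →L[ℂ] H) - TK ∘L ContinuousLinearMap.adjoint TG) f‖
      = ‖TF (ContinuousLinearMap.adjoint TG f) - TK (ContinuousLinearMap.adjoint TG f)‖ := by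
        simp [ContinuousLinearMap.sub_apply, hTFf]
    _ ≤ lam * ‖TF (ContinuousLinearMap.adjoint TG f)‖
          + gam * ‖ContinuousLinearMap.adjoint TG f‖ := hpert _
    _ = lam * ‖f‖ + gam * ‖ContinuousLinearMap.adjoint TG f‖ := by rw [hTFf]
    _ ≤ lam * ‖f‖ + gam * (Real.sqrt B_G * ‖f‖) :=
        add_le_add le_rfl (mul_le_mul_of_nonneg_left (hGb f) hgam)
    _ = (lam + gam * Real.sqrt B_G) * ‖f‖ := by ring
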